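/- On 4 points v₁,v₂,v₃,v₄ in convex position (cyclic order v₁,v₃,v₄,v₂), let T = {v₁v₂, v₃v₄, v₂v₄} and T' = {v₁v₂, v₃v₄, v₁v₃}. Then δ(T,T')=1 but every non-crossing flip sequence from T to T' has length at least 2. -/
import Mathlib


open Finset

noncomputable section
attribute [local instance] Classical.propDecidable

/-- The successor of `i` in the cyclic order on `Fin n`. -/
def nextIdx {n : ℕ} (i : Fin n) : Fin n := ⟨(i.val + 1) % n, Nat.mod_lt _ i.pos⟩

/-- `x` lies strictly between `a` and `b` in the cyclic order on `Fin n`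
(going forwards from `a` to `b`). -/
def CBtw {n : ℕ} (a x b : Fin n) : Prop :=
  0 < (x - a).val ∧ (x - a).val < (b - a).val

/-- Endpoints `a,b` and `c,d` interleave in the cyclic order:
exactly one of `c`, `d` lies strictly between `a` and `b`. -/
def CrossPair {n : ℕ} (a b c d : Fin n) : Prop :=
  Xor' (CBtw a c b) (CBtw a d b)

/-- Two chords of the convex polygon on `n` points (labeled in cyclic order)
cross in their interiors; combinatorially their endpoints interleave. -/
def Crosses {n : ℕ} (e f : Sym2 (Fin n)) : Prop :=
  ∃ a b c d : Fin n, e = s(a, b) ∧ f = s(c, d) ∧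
    a ≠ b ∧ a ≠ c ∧ a ≠ d ∧ b ≠ c ∧ b ≠ d ∧ c ≠ d ∧ CrossPair a b c d

/-- A border edge joins two consecutive points of the convex hull. -/
def IsBorderEdge {n : ℕ} (e : Sym2 (Fin n)) : Prop :=
  ∃ i : Fin n, e = s(i, nextIdx i)

/-- `T` is a non-crossing spanning tree on the `n` points (in convex position,
labeled cyclically by `Fin n`): loopless, `n - 1` edges, connected, and no two
edges cross. -/
def IsNCST (n : ℕ) (T : Finset (Sym2 (Fin n))) : Prop :=
  (∀ e ∈ T, ¬ e.IsDiag) ∧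
  T.card = n - 1 ∧
  (SimpleGraph.fromEdgeSet (↑T : Set (Sym2 (Fin n)))).Connected ∧
  ∀ e ∈ T, ∀ f ∈ T, ¬ Crosses e f

/-- One flip: exactly one edge is removed and one edge is added. -/
def FlipStep {n : ℕ} (T T' : Finset (Sym2 (Fin n))) : Prop :=
  (T \ T').card = 1 ∧ (T' \ T).card = 1

/-- A flip sequence: consecutive non-crossing spanning trees differing by one flip. -/
def IsFlipSeq (n : ℕ) (L : List (Finset (Sym2 (Fin n)))) : Prop :=
  (∀ T ∈ L, IsNCST n T) ∧ L.Chain' FlipStep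

/-- There is a flip sequence of length `ℓ` from `T₁` to `T₂`. -/
def HasFlipSeq (n : ℕ) (T₁ T₂ : Finset (Sym2 (Fin n))) (ℓ : ℕ) : Prop :=
  ∃ L : List (Finset (Sym2 (Fin n))), IsFlipSeq n L ∧ L.length = ℓ + 1 ∧
    L.head? = some T₁ ∧ L.getLast? = some T₂

/-- The side of the chord from `a` to `b`: the two endpoints together with all
points strictly between them in the cyclic order. -/
def sideOf {n : ℕ} (a b : Fin n) : Finset (Fin n) :=
  Finset.univ.filter (fun x => x = a ∨ x = b ∨ CBtw a x b)

/-- Holes of `T` (pairs of consecutive points not joined by an edge of `T`)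
with both endpoints in `A`, indexed by their first point. -/
def holesIn (n : ℕ) (T : Finset (Sym2 (Fin n))) (A : Finset (Fin n)) : Finset (Fin n) :=
  Finset.univ.filter (fun i => s(i, nextIdx i) ∉ T ∧ i ∈ A ∧ nextIdx i ∈ A)

/-- Degree of the side `sideOf a b` in `T'`: the number of endpoints (counted
with multiplicity over the chords of `T'`) lying inside the side. An endpoint
`v` of a chord `vw` is inside the side if `v` belongs to it and either `v` is
not an endpoint of the defining chord `ab` or both `v, w` are in the side. -/
def sideDegree (n : ℕ) (a b : Fin n) (T' : Finset (Sym2 (Fin n))) : ℕ :=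
  ((Finset.univ : Finset (Fin n × Fin n)).filter
    (fun p => s(p.1, p.2) ∈ T' ∧ ¬ IsBorderEdge s(p.1, p.2) ∧
      p.1 ∈ sideOf a b ∧ ((p.1 ≠ a ∧ p.1 ≠ b) ∨ p.2 ∈ sideOf a b))).card

/-- A nice pair of trees: the same border edges, and no common chord. -/
def NicePair (n : ℕ) (T₁ T₂ : Finset (Sym2 (Fin n))) : Prop :=
  IsNCST n T₁ ∧ IsNCST n T₂ ∧
  (∀ e, IsBorderEdge e → (e ∈ T₁ ↔ e ∈ T₂)) ∧
  (∀ e ∈ T₁, e ∈ T₂ → IsBorderEdge e)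

/-- A non-crossing flip: the added edge creates no crossing with the tree
before the removal (in particular it does not cross the deleted edge). -/
def NCFlipStep {n : ℕ} (T T' : Finset (Sym2 (Fin n))) : Prop :=
  FlipStep T T' ∧ ∀ e ∈ T ∪ T', ∀ f ∈ T ∪ T', ¬ Crosses e f

/-- There is a non-crossing flip sequence of length `ℓ` from `T₁` to `T₂`. -/
def HasNCFlipSeq (n : ℕ) (T₁ T₂ : Finset (Sym2 (Fin n))) (ℓ : ℕ) : Prop :=
  ∃ L : List (Finset (Sym2 (Fin n))),
    (∀ T ∈ L, IsNCST n T) ∧ L.Chain' NCFlipStep ∧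
    L.length = ℓ + 1 ∧ L.head? = some T₁ ∧ L.getLast? = some T₂

/-- The 4-point gadget tree `T = {v₁v₂, v₃v₄, v₂v₄}`, with the points labeled
along the hull so that the chords `v₂v₄` and `v₁v₃` cross:
`v₁ ↦ 0, v₂ ↦ 1, v₃ ↦ 2, v₄ ↦ 3`. -/
def T4 : Finset (Sym2 (Fin 4)) := {s(0, 1), s(2, 3), s(1, 3)}

/-- The 4-point gadget tree `T' = {v₁v₂, v₃v₄, v₁v₃}`. -/
def T4' : Finset (Sym2 (Fin 4)) := {s(0, 1), s(2, 3), s(0, 2)}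

/-- `δ(T₄, T₄') = 1` but every non-crossing flip sequence from `T₄` to `T₄'`
has length at least `2`. -/
theorem gadget_ncflip_lower_bound :
    (T4 \ T4').card = 1 ∧ ∀ ℓ : ℕ, HasNCFlipSeq 4 T4 T4' ℓ → 2 ≤ ℓ := by
  constructor
  · decide
  · rintro ℓ ⟨L, hT, hchain, hlen, hhead, hlast⟩
    by_contra h
    push_neg at h
    interval_cases ℓ
    · match L, hlen, hhead, hlast with
      | [A], _, hhead, hlast =>
        simp only [List.head?_cons, Option.some.injEq] at hhead
        simp only [List.getLast?] at hlast
        rw [hhead] at hlast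
        have : T4 ≠ T4' := by decide
        simp_all
    · match L, hlen, hhead, hlast, hchain with
      | [A, B], _, hhead, hlast, hchain =>
        simp only [List.head?_cons, Option.some.injEq] at hhead
        have hB : B = T4' := by
          simpa [List.getLast?] using hlast
        subst hhead; subst hB
        have hstep : NCFlipStep T4 T4' := (List.isChain_cons_cons.mp hchain).1
        have h13 : s(1, 3) ∈ T4 ∪ T4' := by decide
        have h02 : s(0, 2) ∈ T4 ∪ T4' := by decide
        have hcross : Crosses (s(1, 3) : Sym2 (Fin 4)) s(0, 2) := by
          refine ⟨1, 3, 0, 2, rfl, rfl, by decide, by decide, by decide, by decide,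
            by decide, by decide, ?_⟩
          right
          refine ⟨⟨?_, ?_⟩, fun hc => ?_⟩
          · show (0:ℕ) < ((2:Fin 4) - 1).val; decide
          · show ((2:Fin 4) - 1).val < ((3:Fin 4) - 1).val; decide
          · have h2 : ((0:Fin 4) - 1).val < ((3:Fin 4) - 1).val := hc.2
            revert h2; decide
        exact hstep.2 _ h13 _ h02 hcross
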